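/- Let f₀(z) = 2 − log 2 + 2z − exp(z). Then f₀(log 2) = log 2 and f₀'(log 2) = 0 (so log 2 is a superattracting fixed point of f₀), and there exists r > 0 such that f₀ maps the closed disk D̄ = {z ∈ ℂ : |z − log 2| ≤ r} into itself and the iterates f₀^[n] converge uniformly on D̄ to the constant function log 2; consequently the open disk {z ∈ ℂ : |z − log 2| < r} is contained in the Fatou set of f₀. -/

import Mathlib

open Filter Topology

/-- The chordal (spherical) distance on `ℂ`. -/
noncomputable def chordalDist (a b : ℂ) : ℝ :=
  2 * ‖a - b‖ /
    (Real.sqrt (1 + ‖a‖ ^ 2) * Real.sqrt (1 + ‖b‖ ^ 2))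

/-- The Fatou set of `f`: points having a neighborhood on which the family of
iterates of `f` is uniformly equicontinuous with respect to the chordal distance. -/
def fatouSet (f : ℂ → ℂ) : Set ℂ :=
  {z | ∃ V ∈ 𝓝 z, ∀ ε : ℝ, 0 < ε → ∃ δ : ℝ, 0 < δ ∧
    ∀ x ∈ V, ∀ y ∈ V, chordalDist x y < δ →
      ∀ n : ℕ, chordalDist (f^[n] x) (f^[n] y) < ε}

/-- The Julia set of `f`. -/
def juliaSet (f : ℂ → ℂ) : Set ℂ := (fatouSet f)ᶜ

/-- A Fatou component: a connected component of the Fatou set. -/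
def IsFatouComponent (f : ℂ → ℂ) (U : Set ℂ) : Prop :=
  ∃ z ∈ fatouSet f, U = connectedComponentIn (fatouSet f) z

/-- A transcendental entire function: entire and not a polynomial. -/
def TranscendentalEntire (f : ℂ → ℂ) : Prop :=
  Differentiable ℂ f ∧ ¬ ∃ p : Polynomial ℂ, ∀ z, f z = p.eval z

/-- `U` is a `p`-periodic Baker domain of `f`: a Fatou component with
`f^[p](U) ⊆ U` on which the iterates `f^[n*p]` tend to `∞` locally uniformly. -/
def IsBakerDomain (f : ℂ → ℂ) (p : ℕ) (U : Set ℂ) : Prop :=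
  IsFatouComponent f U ∧ 1 ≤ p ∧ f^[p] '' U ⊆ U ∧
    ∀ K : Set ℂ, K ⊆ U → IsCompact K → ∀ R : ℝ, 0 < R →
      ∃ N : ℕ, ∀ n ≥ N, ∀ z ∈ K, R < ‖f^[n * p] z‖

/-- `ζ` is accessible from `U`: some curve in `U` lands at `ζ`. -/
def AccessibleFrom (U : Set ℂ) (ζ : ℂ) : Prop :=
  ∃ γ : ℝ → ℂ, ContinuousOn γ (Set.Ico 0 1) ∧ (∀ t ∈ Set.Ico (0:ℝ) 1, γ t ∈ U) ∧
    Tendsto γ (𝓝[Set.Ico (0:ℝ) 1] 1) (𝓝 ζ)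

/-- The set of critical values of `f`. -/
def criticalValues (f : ℂ → ℂ) : Set ℂ := {w | ∃ c : ℂ, deriv f c = 0 ∧ f c = w}

/-- The set of finite asymptotic values of `f`. -/
def asymptoticValues (f : ℂ → ℂ) : Set ℂ :=
  {a | ∃ γ : ℝ → ℂ, ContinuousOn γ (Set.Ici 0) ∧
    Tendsto (fun t => ‖γ t‖) atTop atTop ∧
    Tendsto (fun t => f (γ t)) atTop (𝓝 a)}

/-- `Sing(f⁻¹)`: the closure of the union of critical and finite asymptotic values. -/
def singInv (f : ℂ → ℂ) : Set ℂ := closure (criticalValues f ∪ asymptoticValues f)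

/-- The postsingular set `P(f)`. -/
def postSingular (f : ℂ → ℂ) : Set ℂ := closure (⋃ n : ℕ, f^[n] '' singInv f)

/-- `f` is semihyperbolic at `a`: there are `r > 0` and `N` such that for all `n`,
on each connected component of `(f^[n])⁻¹(D_r(a))` the map `f^[n]` is proper onto
`D_r(a)` with all fibers of cardinality at most `N`. -/
def SemihyperbolicAt (f : ℂ → ℂ) (a : ℂ) : Prop :=
  ∃ r : ℝ, 0 < r ∧ ∃ N : ℕ,
    ∀ n : ℕ, ∀ z : ℂ, f^[n] z ∈ Metric.ball a r →
      (∀ K : Set ℂ, K ⊆ Metric.ball a r → IsCompact K →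
        IsCompact (connectedComponentIn ((f^[n]) ⁻¹' Metric.ball a r) z ∩ (f^[n]) ⁻¹' K)) ∧
      (∀ w ∈ Metric.ball a r,
        (connectedComponentIn ((f^[n]) ⁻¹' Metric.ball a r) z ∩ (f^[n]) ⁻¹' {w}).Finite ∧
        (connectedComponentIn ((f^[n]) ⁻¹' Metric.ball a r) z ∩ (f^[n]) ⁻¹' {w}).ncard ≤ N)

/-- A wandering domain: a Fatou component whose forward images lie in pairwise
distinct Fatou components. -/
def IsWanderingDomain (f : ℂ → ℂ) (W : Set ℂ) : Prop :=
  IsFatouComponent f W ∧ ∀ z ∈ W, ∀ m n : ℕ, m ≠ n →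
    connectedComponentIn (fatouSet f) (f^[m] z) ≠ connectedComponentIn (fatouSet f) (f^[n] z)

/-- An arc in `U` with endpoints `a` and `b`: the image of an injective continuous
map `(0,1) → U` admitting the limits `a` and `b` at the two ends. -/
def IsArcWithEndpoints (U : Set ℂ) (lam : Set ℂ) (a b : ℂ) : Prop :=
  ∃ c : ℝ → ℂ, ContinuousOn c (Set.Ioo 0 1) ∧ Set.InjOn c (Set.Ioo 0 1) ∧
    c '' Set.Ioo 0 1 = lam ∧ lam ⊆ U ∧
    Tendsto c (𝓝[Set.Ioo (0:ℝ) 1] 0) (𝓝 a) ∧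
    Tendsto c (𝓝[Set.Ioo (0:ℝ) 1] 1) (𝓝 b)

/-- The Bergweiler function `f₀(z) = 2 - log 2 + 2z - e^z`. -/
noncomputable def f₀ : ℂ → ℂ := fun z => 2 - Real.log 2 + 2 * z - Complex.exp z


lemma expL : Complex.exp (Real.log 2 : ℂ) = 2 := by
  rw [← Complex.ofReal_exp, Real.exp_log (by norm_num)]
  norm_num

lemma f₀_fixed : f₀ (Real.log 2 : ℂ) = (Real.log 2 : ℂ) := by
  unfold f₀; rw [expL]; ring

lemma f₀_hasDerivAt (z : ℂ) : HasDerivAt f₀ (2 - Complex.exp z) z := by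
  have h : HasDerivAt (fun z : ℂ => 2 - Real.log 2 + 2 * z - Complex.exp z)
      (0 + 2 * 1 - Complex.exp z) z := by
    exact ((hasDerivAt_const z ((2 : ℂ) - Real.log 2)).add
      ((hasDerivAt_id z).const_mul 2)).sub (Complex.hasDerivAt_exp z)
  unfold f₀; simpa only [zero_add, mul_one] using h

lemma f₀_deriv_fixed : deriv f₀ (Real.log 2 : ℂ) = 0 := by
  rw [(f₀_hasDerivAt _).deriv, expL]; ring

lemma f₀_contract {z : ℂ} (hz : ‖z - Real.log 2‖ ≤ 1/4) :
    ‖f₀ z - Real.log 2‖ ≤ (1/2) * ‖z - Real.log 2‖ := by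
  set w : ℂ := z - Real.log 2 with hw
  have hkey : f₀ z - (Real.log 2 : ℂ) = -2 * (Complex.exp w - 1 - w) := by
    have : Complex.exp z = 2 * Complex.exp w := by
      rw [hw, Complex.exp_sub, expL]
      field_simp
    simp only [f₀, this, hw]; ring
  rw [hkey]
  have h1 : ‖w‖ ≤ 1 := le_trans hz (by norm_num)
  have h2 := Complex.norm_exp_sub_one_sub_id_le h1
  have : ‖-2 * (Complex.exp w - 1 - w)‖ = 2 * ‖Complex.exp w - 1 - w‖ := by
    rw [norm_mul]; simp
  rw [this]
  calc 2 * ‖Complex.exp w - 1 - w‖ ≤ 2 * ‖w‖ ^ 2 := by linarith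
    _ ≤ (1/2) * ‖w‖ := by nlinarith [norm_nonneg w]



lemma f₀_mapsTo : Set.MapsTo f₀ (Metric.closedBall (Real.log 2 : ℂ) (1/4))
    (Metric.closedBall (Real.log 2 : ℂ) (1/4)) := by
  intro z hz
  rw [Metric.mem_closedBall, Complex.dist_eq] at hz ⊢
  have := f₀_contract hz
  nlinarith [norm_nonneg (z - (Real.log 2 : ℂ))]

lemma f₀_iter_bound (n : ℕ) {z : ℂ} (hz : z ∈ Metric.closedBall (Real.log 2 : ℂ) (1/4)) :
    ‖f₀^[n] z - Real.log 2‖ ≤ (1/2)^n * (1/4) := by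
  induction n with
  | zero => simpa [Complex.dist_eq] using hz
  | succ n ih =>
    have hpow : ((1:ℝ)/2)^n ≤ 1 := pow_le_one₀ (by norm_num) (by norm_num)
    have hmem : ‖f₀^[n] z - (Real.log 2 : ℂ)‖ ≤ 1/4 := by nlinarith
    rw [Function.iterate_succ_apply']
    have := f₀_contract hmem
    calc ‖f₀ (f₀^[n] z) - Real.log 2‖
        ≤ (1/2) * ‖f₀^[n] z - Real.log 2‖ := this
      _ ≤ (1/2) * ((1/2)^n * (1/4)) := by linarith
      _ = (1/2)^(n+1) * (1/4) := by ring

lemma f₀_lip {x y : ℂ} (hx : x ∈ Metric.closedBall (Real.log 2 : ℂ) (1/4))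
    (hy : y ∈ Metric.closedBall (Real.log 2 : ℂ) (1/4)) :
    ‖f₀ y - f₀ x‖ ≤ ‖y - x‖ := by
  have h := (convex_closedBall (Real.log 2 : ℂ) (1/4)).norm_image_sub_le_of_norm_hasDerivWithin_le
    (f' := fun z => 2 - Complex.exp z) (C := 1)
    (fun z _ => (f₀_hasDerivAt z).hasDerivWithinAt)
    (fun z hz => by
      rw [Metric.mem_closedBall, Complex.dist_eq] at hz
      set w : ℂ := z - Real.log 2 with hw
      have hkey : (2 : ℂ) - Complex.exp z = -2 * (Complex.exp w - 1) := by
        have : Complex.exp z = 2 * Complex.exp w := by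
          rw [hw, Complex.exp_sub, expL]; field_simp
        rw [this]; ring
      show ‖2 - Complex.exp z‖ ≤ 1
      rw [hkey]
      have h1 : ‖w‖ ≤ 1 := le_trans hz (by norm_num)
      have h2 := Complex.norm_exp_sub_one_le h1
      have h3 : ‖-2 * (Complex.exp w - 1)‖ = 2 * ‖Complex.exp w - 1‖ := by
        rw [norm_mul]; simp
      rw [h3]; nlinarith)
    hx hy
  simpa using h

lemma f₀_iter_lip (n : ℕ) {x y : ℂ} (hx : x ∈ Metric.closedBall (Real.log 2 : ℂ) (1/4))
    (hy : y ∈ Metric.closedBall (Real.log 2 : ℂ) (1/4)) :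
    ‖f₀^[n] y - f₀^[n] x‖ ≤ ‖y - x‖ := by
  induction n generalizing x y with
  | zero => simp
  | succ n ih =>
    rw [Function.iterate_succ_apply, Function.iterate_succ_apply]
    exact le_trans (ih (f₀_mapsTo hx) (f₀_mapsTo hy)) (f₀_lip hx hy)

lemma chordal_nonneg (a b : ℂ) : 0 ≤ chordalDist a b := by
  unfold chordalDist
  positivity

lemma chordal_le (a b : ℂ) : chordalDist a b ≤ 2 * ‖a - b‖ := by
  unfold chordalDist
  have h1 : (1:ℝ) ≤ Real.sqrt (1 + ‖a‖ ^ 2) := by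
    have hs := Real.sq_sqrt (show (0:ℝ) ≤ 1 + ‖a‖ ^ 2 by positivity)
    nlinarith [Real.sqrt_nonneg (1 + ‖a‖ ^ 2), sq_nonneg (‖a‖)]
  have h2 : (1:ℝ) ≤ Real.sqrt (1 + ‖b‖ ^ 2) := by
    have hs := Real.sq_sqrt (show (0:ℝ) ≤ 1 + ‖b‖ ^ 2 by positivity)
    nlinarith [Real.sqrt_nonneg (1 + ‖b‖ ^ 2), sq_nonneg (‖b‖)]
  have hD : (1:ℝ) ≤ Real.sqrt (1 + ‖a‖ ^ 2) * Real.sqrt (1 + ‖b‖ ^ 2) := by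
    nlinarith
  rw [div_le_iff₀ (by linarith)]
  nlinarith [norm_nonneg (a - b)]

lemma le_chordal {M : ℝ} (hM : 0 ≤ M) {a b : ℂ} (ha : ‖a‖ ≤ M)
    (hb : ‖b‖ ≤ M) :
    2 * ‖a - b‖ ≤ (1 + M^2) * chordalDist a b := by
  have hDa : Real.sqrt (1 + ‖a‖ ^ 2) ≤ Real.sqrt (1 + M^2) :=
    Real.sqrt_le_sqrt (by nlinarith [norm_nonneg a])
  have hDb : Real.sqrt (1 + ‖b‖ ^ 2) ≤ Real.sqrt (1 + M^2) :=
    Real.sqrt_le_sqrt (by nlinarith [norm_nonneg b])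
  have hsq : Real.sqrt (1 + M^2) * Real.sqrt (1 + M^2) = 1 + M^2 :=
    Real.mul_self_sqrt (by positivity)
  have hpos_a : 0 < Real.sqrt (1 + ‖a‖ ^ 2) :=
    Real.sqrt_pos.mpr (by positivity)
  have hpos_b : 0 < Real.sqrt (1 + ‖b‖ ^ 2) :=
    Real.sqrt_pos.mpr (by positivity)
  have hD : Real.sqrt (1 + ‖a‖ ^ 2) * Real.sqrt (1 + ‖b‖ ^ 2) ≤ 1 + M^2 := by
    nlinarith
  unfold chordalDist
  rw [← mul_div_assoc, le_div_iff₀ (mul_pos hpos_a hpos_b)]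
  nlinarith [norm_nonneg (a - b)]


/-- `log 2` is a superattracting fixed point of `f₀`:
`f₀ (log 2) = log 2`, `f₀' (log 2) = 0`, and some closed disk around `log 2`
is mapped into itself with the iterates converging uniformly to `log 2`;
the corresponding open disk lies in the Fatou set of `f₀`. -/
theorem stmt10 :
    f₀ (Real.log 2 : ℂ) = (Real.log 2 : ℂ) ∧
    deriv f₀ (Real.log 2 : ℂ) = 0 ∧
    ∃ r : ℝ, 0 < r ∧
      Set.MapsTo f₀ (Metric.closedBall (Real.log 2 : ℂ) r)
        (Metric.closedBall (Real.log 2 : ℂ) r) ∧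
      TendstoUniformlyOn (fun n z => f₀^[n] z) (fun _ => (Real.log 2 : ℂ)) atTop
        (Metric.closedBall (Real.log 2 : ℂ) r) ∧
      Metric.ball (Real.log 2 : ℂ) r ⊆ fatouSet f₀ := by
  refine ⟨f₀_fixed, f₀_deriv_fixed, 1/4, by norm_num, f₀_mapsTo, ?_, ?_⟩
  · -- uniform convergence
    rw [Metric.tendstoUniformlyOn_iff]
    intro ε hε
    have htend : Tendsto (fun n : ℕ => ((1:ℝ)/2)^n * (1/4)) atTop (𝓝 0) := by
      have h0 : (0:ℝ) ≤ 1/2 := by norm_num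
      have h1 : (1:ℝ)/2 < 1 := by norm_num
      simpa using (tendsto_pow_atTop_nhds_zero_of_lt_one h0 h1).mul_const (1/4 : ℝ)
    filter_upwards [(htend.eventually (gt_mem_nhds hε))] with n hn z hz
    rw [dist_comm, Complex.dist_eq]
    exact lt_of_le_of_lt (f₀_iter_bound n hz) hn
  · -- Fatou set
    intro z hz
    refine ⟨Metric.ball (Real.log 2 : ℂ) (1/4), Metric.isOpen_ball.mem_nhds hz, ?_⟩
    intro ε hε
    set M : ℝ := ‖(Real.log 2 : ℂ)‖ + 1/4 with hM
    have hM0 : 0 ≤ M := by positivity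
    refine ⟨ε / (1 + M^2), by positivity, ?_⟩
    intro x hx y hy hxy n
    have hx' : x ∈ Metric.closedBall (Real.log 2 : ℂ) (1/4) := Metric.ball_subset_closedBall hx
    have hy' : y ∈ Metric.closedBall (Real.log 2 : ℂ) (1/4) := Metric.ball_subset_closedBall hy
    have habs : ∀ w : ℂ, w ∈ Metric.closedBall (Real.log 2 : ℂ) (1/4) → ‖w‖ ≤ M := by
      intro w hw
      rw [Metric.mem_closedBall, Complex.dist_eq] at hw
      calc ‖w‖ = ‖(w - Real.log 2) + Real.log 2‖ := by ring_nf
        _ ≤ ‖w - Real.log 2‖ + ‖(Real.log 2 : ℂ)‖ := norm_add_le _ _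
        _ ≤ M := by rw [hM]; linarith
    have hxyeu : 2 * ‖x - y‖ ≤ (1 + M^2) * chordalDist x y :=
      le_chordal hM0 (habs x hx') (habs y hy')
    have hstep : ‖f₀^[n] x - f₀^[n] y‖ ≤ ‖x - y‖ := by
      have := f₀_iter_lip n hy' hx'
      simpa using this
    calc chordalDist (f₀^[n] x) (f₀^[n] y)
        ≤ 2 * ‖f₀^[n] x - f₀^[n] y‖ := chordal_le _ _
      _ ≤ 2 * ‖x - y‖ := by linarith
      _ ≤ (1 + M^2) * chordalDist x y := hxyeu
      _ < (1 + M^2) * (ε / (1 + M^2)) := by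
          apply mul_lt_mul_of_pos_left hxy (by positivity)
      _ = ε := by field_simp
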